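/- Let A be an infinite dimensional simple separable unital C*-algebra and let α : G → Aut(A) be an action of a finite group G with the tracial Rokhlin property. Then for every finite F ⊆ A, every ε > 0, and every positive x ∈ A with ‖x‖ = 1, there are mutually orthogonal projections e_g ∈ A (g ∈ G) such that: ‖α_g(e_h) − e_{gh}‖ < ε for all g,h; ‖e_g a − a e_g‖ < ε for g ∈ G, a ∈ F; the projection e = Σ_g e_g is α-invariant (α_g(e) = e for all g); 1 − e is Murray-von Neumann equivalent to a projection in the hereditary subalgebra generated by x; and ‖e x e‖ > 1 − ε. -/

import Mathlib

open Matrix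
open scoped ComplexOrder

noncomputable section

/-- A projection in a `*`-algebra: a selfadjoint idempotent. -/
def IsProjectionElem {A : Type*} [Mul A] [Star A] (p : A) : Prop :=
  star p = p ∧ p * p = p

/-- Murray-von Neumann equivalence of projections. -/
def MvNEquiv {A : Type*} [Mul A] [Star A] (p q : A) : Prop :=
  ∃ v : A, star v * v = p ∧ v * star v = q

/-- `p` is Murray-von Neumann equivalent to a subprojection of `q`. -/
def MvNSubEquiv {A : Type*} [Mul A] [Star A] (p q : A) : Prop :=
  ∃ v : A, star v * v = p ∧ q * (v * star v) = v * star v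

/-- The hereditary subalgebra generated by `x`: the closure of `x A x`. -/
def herSub {A : Type*} [Mul A] [TopologicalSpace A] (x : A) : Set A :=
  closure {y : A | ∃ a : A, y = x * a * x}

/-- `p` is Murray-von Neumann equivalent to a projection in the hereditary
subalgebra generated by `x`. -/
def MvNInHer {A : Type*} [Mul A] [Star A] [TopologicalSpace A] (p x : A) : Prop :=
  ∃ q : A, IsProjectionElem q ∧ q ∈ herSub x ∧ MvNEquiv p q

/-- Simplicity of a C*-algebra: it is nonzero and has no nontrivial closed
two-sided ideals. -/
def IsSimpleCStarAlgebra (A : Type*) [NonUnitalNonAssocRing A] [TopologicalSpace A] : Prop :=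
  (∃ a : A, a ≠ 0) ∧
    ∀ I : TwoSidedIdeal A, IsClosed (I : Set A) → (I : Set A) = {0} ∨ (I : Set A) = Set.univ

section Rokhlin

variable {G : Type*} [Group G] [Fintype G] {A : Type*} [CStarAlgebra A]
  [PartialOrder A] [StarOrderedRing A]

/-- The tracial Rokhlin property for an action of a finite group `G`. -/
def TracialRokhlin (α : G → A ≃⋆ₐ[ℂ] A) : Prop :=
  ∀ (F : Finset A) (ε : ℝ), 0 < ε → ∀ x : A, 0 ≤ x → ‖x‖ = 1 →
    ∃ e : G → A, (∀ g, IsProjectionElem (e g)) ∧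
      (∀ g h, g ≠ h → e g * e h = 0) ∧
      (∀ g h, ‖α g (e h) - e (g * h)‖ < ε) ∧
      (∀ g, ∀ a ∈ F, ‖e g * a - a * e g‖ < ε) ∧
      MvNInHer (1 - ∑ g : G, e g) x ∧
      1 - ε < ‖(∑ g : G, e g) * x * (∑ g : G, e g)‖

/-- The strict Rokhlin property for an action of a finite group `G`. -/
def StrictRokhlin (α : G → A ≃⋆ₐ[ℂ] A) : Prop :=
  ∀ (F : Finset A) (ε : ℝ), 0 < ε →
    ∃ e : G → A, (∀ g, IsProjectionElem (e g)) ∧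
      (∀ g h, g ≠ h → e g * e h = 0) ∧
      (∀ g h, ‖α g (e h) - e (g * h)‖ < ε) ∧
      (∀ g, ∀ a ∈ F, ‖e g * a - a * e g‖ < ε) ∧
      (∑ g : G, e g) = 1

end Rokhlin


section AuxLemmas
variable {A : Type*} [CStarAlgebra A]

lemma proj_norm_le {p : A} (hp : IsProjectionElem p) : ‖p‖ ≤ 1 := by
  have h := CStarRing.norm_star_mul_self (x := p)
  rw [hp.1, hp.2] at h
  nlinarith [norm_nonneg p]

lemma one_sub_proj {p : A} (hp : IsProjectionElem p) : IsProjectionElem (1 - p) := by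
  constructor
  · simp [star_sub, hp.1]
  · simp only [mul_sub, sub_mul, one_mul, mul_one, hp.2]; abel

/-- Conjugation by a selfadjoint symmetry, as a star algebra homomorphism. -/
noncomputable def conjSAH (s : A) (h1 : star s = s) (h2 : s * s = 1) : A →⋆ₐ[ℂ] A where
  toFun x := s * x * s
  map_one' := by show s * 1 * s = 1; rw [mul_one, h2]
  map_mul' x y := by
    simp only [mul_assoc]
    rw [← mul_assoc s s (y * s), h2, one_mul]
  map_zero' := by simp
  map_add' x y := by simp [mul_add, add_mul]
  commutes' c := by
    simp only [Algebra.algebraMap_eq_smul_one]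
    rw [mul_smul_comm, mul_one, smul_mul_assoc, h2]
  map_star' x := by
    simp only [StarMul.star_mul, h1, mul_assoc]

lemma commute_cfc_of_commute {p b : A} (hp : IsProjectionElem p) (hb : IsSelfAdjoint b)
    (hpb : p * b = b * p) (g : ℝ → ℝ) (hg : ContinuousOn g (spectrum ℝ b)) :
    p * cfc g b = cfc g b * p := by
  set s : A := p + p - 1 with hs
  have h1 : star s = s := by simp [hs, star_sub, hp.1]
  have h2 : s * s = 1 := by
    simp only [hs, mul_sub, sub_mul, mul_add, add_mul, hp.2, one_mul, mul_one]
    abel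
  set φ := conjSAH s h1 h2 with hφ
  have hφcont : Continuous φ := by
    show Continuous fun x => s * x * s
    fun_prop
  have hsb : s * b = b * s := by
    simp only [hs, sub_mul, mul_sub, add_mul, mul_add, one_mul, mul_one, hpb]
  have hφb : φ b = b := by
    show s * b * s = b
    rw [hsb, mul_assoc, h2, mul_one]
  have hφsa : IsSelfAdjoint (φ b) := by rw [hφb]; exact hb
  have key : φ (cfc g b) = cfc g b := by
    rw [StarAlgHomClass.map_cfc φ g b hg hφcont hb hφsa, hφb]
  have hsc : s * cfc g b = cfc g b * s := by
    have : s * cfc g b * s = cfc g b := key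
    calc s * cfc g b = (s * cfc g b * s) * s := by
          rw [mul_assoc (s * cfc g b) s s, h2, mul_one]
      _ = cfc g b * s := by rw [this]
  -- from (p+p-1)c = c(p+p-1) deduce pc = cp
  have h2' : (2:ℂ) • (p * cfc g b) = (2:ℂ) • (cfc g b * p) := by
    have hexp : p * cfc g b + p * cfc g b = cfc g b * p + cfc g b * p := by
      have := hsc
      simp only [hs, sub_mul, mul_sub, add_mul, mul_add, one_mul, mul_one] at this
      have h3 := congrArg (· + cfc g b) this
      simpa [sub_add_cancel] using h3
    rw [two_smul, two_smul]
    exact hexp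
  have := smul_right_injective A (two_ne_zero (α := ℂ)) h2'
  exact this



/-- The bump function used to cut a nearly-idempotent selfadjoint element to a projection. -/
noncomputable def rokF : ℝ → ℝ := fun t => min 1 (max 0 (2*t - 1/2))

lemma rokF_cont : Continuous rokF := by
  unfold rokF; fun_prop

lemma rokF_spec {t η : ℝ} (hη : η ≤ 1/16) (h : |t*t - t| ≤ η) :
    rokF t * rokF t = rokF t ∧ |rokF t - t| ≤ 2*η := by
  rw [abs_le] at h
  have hη0 : 0 ≤ η := by nlinarith [sq_nonneg (t - 1/2), sq_nonneg t, abs_nonneg (t*t - t)]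
  rcases le_or_gt t (1/4) with ht | ht
  · have hf : rokF t = 0 := by
      have : 2*t - 1/2 ≤ 0 := by linarith
      unfold rokF; rw [max_eq_left this, min_eq_right zero_le_one]
    rw [hf]
    refine ⟨by ring, ?_⟩
    rw [abs_le]
    rcases le_or_gt 0 t with h0 | h0
    · constructor <;> nlinarith
    · constructor <;> nlinarith
  · have ht' : 3/4 ≤ t := by nlinarith
    have hf : rokF t = 1 := by
      have h1 : (0:ℝ) ≤ 2*t - 1/2 := by linarith
      have h2 : (1:ℝ) ≤ 2*t - 1/2 := by linarith
      unfold rokF; rw [max_eq_right h1, min_eq_left h2]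
    rw [hf]
    refine ⟨by ring, ?_⟩
    rw [abs_le]
    constructor <;> nlinarith


variable {A : Type*} [CStarAlgebra A]

lemma spec_quad {a : A} (ha : IsSelfAdjoint a) {η : ℝ} (h : ‖a*a - a‖ ≤ η) :
    ∀ t ∈ spectrum ℝ a, |t*t - t| ≤ η := by
  intro t ht
  have key : cfc (fun t : ℝ => t*t - t) a = a*a - a := by
    rw [cfc_sub (fun t : ℝ => t*t) (fun t : ℝ => t) a (by fun_prop) (by fun_prop)]
    rw [cfc_mul (fun t : ℝ => t) (fun t : ℝ => t) a (by fun_prop) (by fun_prop), cfc_id' ℝ a]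
  have := norm_apply_le_norm_cfc (fun t : ℝ => t*t - t) a ht (by fun_prop) ha
  rw [key] at this
  calc |t*t - t| = ‖t*t - t‖ := (Real.norm_eq_abs _).symm
    _ ≤ ‖a*a - a‖ := this
    _ ≤ η := h

lemma cfc_rokF_proj {a : A} (ha : IsSelfAdjoint a) {η : ℝ} (hη : η ≤ 1/16)
    (h : ‖a*a - a‖ ≤ η) :
    IsProjectionElem (cfc rokF a) ∧ ‖cfc rokF a - a‖ ≤ 2*η := by
  have hsp := spec_quad ha h
  have hη0 : 0 ≤ η := le_trans (norm_nonneg _) h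
  refine ⟨⟨?_, ?_⟩, ?_⟩
  · exact (cfc_predicate rokF a).star_eq
  · rw [← cfc_mul rokF rokF a rokF_cont.continuousOn rokF_cont.continuousOn]
    exact cfc_congr fun t ht => (rokF_spec hη (hsp t ht)).1
  · have key : cfc rokF a - a = cfc (fun t => rokF t - t) a := by
      rw [cfc_sub rokF (fun t : ℝ => t) a rokF_cont.continuousOn (by fun_prop), cfc_id' ℝ a]
    rw [key]
    refine norm_cfc_le (by linarith) fun t ht => ?_
    rw [Real.norm_eq_abs]
    exact (rokF_spec hη (hsp t ht)).2



lemma sqrt_inv_close {t : ℝ} (h1 : 1/2 ≤ t) (h2 : t ≤ 3/2) :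
    |(Real.sqrt t)⁻¹ - 1| ≤ |t - 1| := by
  set u := Real.sqrt t with hu
  have hut : u * u = t := Real.mul_self_sqrt (by linarith)
  have hu0 : 0 < u := Real.sqrt_pos.2 (by linarith)
  have hu7 : (7:ℝ)/10 ≤ u := by nlinarith
  have e1 : u⁻¹ - 1 = (1 - u)/u := by field_simp
  rw [e1, abs_div, abs_of_pos hu0, div_le_iff₀ hu0]
  have e2 : |t - 1| = |1 - u| * (1 + u) := by
    rw [abs_sub_comm, ← hut, show 1 - u*u = (1-u)*(1+u) by ring, abs_mul,
      abs_of_pos (by linarith : (0:ℝ) < 1 + u)]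
  rw [e2]
  nlinarith [abs_nonneg (1 - u)]

lemma close_proj_conj {A : Type*} [CStarAlgebra A] {p e : A}
    (hp : IsProjectionElem p) (he : IsProjectionElem e) (hδ : ‖e - p‖ ≤ 1/10) :
    ∃ w : A, star w * w = 1 ∧ w * star w = 1 ∧ w * p * star w = e ∧
      ‖w - 1‖ ≤ 10 * ‖e - p‖ := by
  have h1n : ‖(1:A)‖ ≤ 1 := proj_norm_le ⟨star_one A, one_mul 1⟩
  set δ := ‖e - p‖ with hδdef
  have hδ0 : 0 ≤ δ := norm_nonneg _
  set v := e*p + (1-e)*(1-p) with hvdef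
  have hv1 : v - 1 = e*(p-e) - (1-e)*(p-e) := by
    simp only [hvdef, mul_sub, sub_mul, mul_add, add_mul, one_mul, mul_one, he.2]
    abel
  have hpe : ‖p - e‖ = δ := norm_sub_rev e p ▸ rfl
  have hv1n : ‖v - 1‖ ≤ 2*δ := by
    rw [hv1]
    calc ‖e*(p-e) - (1-e)*(p-e)‖ ≤ ‖e*(p-e)‖ + ‖(1-e)*(p-e)‖ := norm_sub_le _ _
      _ ≤ ‖e‖*‖p-e‖ + ‖1-e‖*‖p-e‖ := by
          gcongr <;> exact norm_mul_le _ _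
      _ ≤ 1*δ + 1*δ := by
          rw [hpe]
          gcongr
          · exact proj_norm_le he
          · exact proj_norm_le (one_sub_proj he)
      _ = 2*δ := by ring
  have haux1 : (1-p)*p = 0 := by rw [sub_mul, one_mul, hp.2, sub_self]
  have haux2 : e*(1-e) = 0 := by rw [mul_sub, mul_one, he.2, sub_self]
  have hvp : v * p = e * v := by
    rw [hvdef, add_mul, mul_add, mul_assoc (1-e) (1-p) p, haux1, mul_zero, add_zero,
      ← mul_assoc e (1-e) (1-p), haux2, zero_mul, add_zero, mul_assoc e p p, hp.2,
      ← mul_assoc e e p, he.2]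
  have hpv : p * star v = star v * e := by
    calc p * star v = star (v * p) := by rw [StarMul.star_mul, hp.1]
      _ = star (e * v) := by rw [hvp]
      _ = star v * e := by rw [StarMul.star_mul, he.1]
  set b := star v * v with hbdef
  have hb_sa : IsSelfAdjoint b := IsSelfAdjoint.star_mul_self v
  have hpb : p * b = b * p := by
    calc p * b = (p * star v) * v := by rw [hbdef, mul_assoc]
      _ = star v * (e * v) := by rw [hpv, mul_assoc]
      _ = star v * (v * p) := by rw [← hvp]
      _ = b * p := by rw [hbdef, mul_assoc]
  have hvn : ‖v‖ ≤ 1 + 2*δ := by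
    calc ‖v‖ = ‖(v - 1) + 1‖ := by rw [sub_add_cancel]
      _ ≤ ‖v - 1‖ + ‖(1:A)‖ := norm_add_le _ _
      _ ≤ 2*δ + 1 := by gcongr
      _ = 1 + 2*δ := by ring
  have hb1 : ‖b - 1‖ ≤ 5*δ := by
    have key : b - 1 = star v * (v - 1) + (star v - 1) := by rw [hbdef]; noncomm_ring
    have hsv1 : ‖star v - 1‖ = ‖v - 1‖ := by
      rw [show star v - 1 = star (v - 1) by rw [star_sub, star_one], norm_star]
    calc ‖b - 1‖ ≤ ‖star v * (v - 1)‖ + ‖star v - 1‖ := key ▸ norm_add_le _ _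
      _ ≤ ‖star v‖ * ‖v - 1‖ + ‖v - 1‖ := by rw [hsv1]; gcongr; exact norm_mul_le _ _
      _ ≤ (1 + 2*δ) * (2*δ) + 2*δ := by rw [norm_star]; gcongr
      _ ≤ 5*δ := by nlinarith
  have hspec : ∀ t ∈ spectrum ℝ b, |t - 1| ≤ 5*δ := by
    intro t ht
    have key : cfc (fun t : ℝ => t - 1) b = b - 1 := by
      rw [cfc_sub (fun t : ℝ => t) (fun _ : ℝ => (1:ℝ)) b (by fun_prop) (by fun_prop),
        cfc_id' ℝ b, cfc_const_one ℝ b]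
    have := norm_apply_le_norm_cfc (fun t : ℝ => t - 1) b ht (by fun_prop) hb_sa
    rw [key] at this
    calc |t - 1| = ‖t - 1‖ := (Real.norm_eq_abs _).symm
      _ ≤ ‖b - 1‖ := this
      _ ≤ 5*δ := hb1
  have hspec' : ∀ t ∈ spectrum ℝ b, 1/2 ≤ t ∧ t ≤ 3/2 := by
    intro t ht
    have := hspec t ht
    rw [abs_le] at this
    constructor <;> nlinarith [this.1, this.2]
  set g : ℝ → ℝ := fun t => (Real.sqrt t)⁻¹ with hgdef
  have hg : ContinuousOn g (spectrum ℝ b) := by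
    apply ContinuousOn.inv₀ Real.continuous_sqrt.continuousOn
    intro t ht
    exact ne_of_gt (Real.sqrt_pos.2 (by linarith [(hspec' t ht).1]))
  have hc_sa : IsSelfAdjoint (cfc g b) := cfc_predicate g b
  have hcbc : cfc g b * b * cfc g b = 1 := by
    calc cfc g b * b * cfc g b
        = cfc (fun t => g t * t) b * cfc g b := by
          rw [cfc_mul g (fun t : ℝ => t) b hg (by fun_prop), cfc_id' ℝ b]
      _ = cfc (fun t => g t * t * g t) b := by
          rw [cfc_mul (fun t => g t * t) g b (hg.mul continuousOn_id) hg]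
      _ = cfc (fun _ : ℝ => (1:ℝ)) b := by
          refine cfc_congr fun t ht => ?_
          have hpos : 0 < t := by linarith [(hspec' t ht).1]
          have hs : Real.sqrt t * Real.sqrt t = t := Real.mul_self_sqrt hpos.le
          have hsne : Real.sqrt t ≠ 0 := ne_of_gt (Real.sqrt_pos.2 hpos)
          show (Real.sqrt t)⁻¹ * t * (Real.sqrt t)⁻¹ = 1
          rw [← hs]; field_simp; rw [Real.sqrt_sq (Real.sqrt_nonneg t)]
      _ = 1 := cfc_const_one ℝ b
  have hccb : (cfc g b * cfc g b) * b = 1 := by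
    calc (cfc g b * cfc g b) * b
        = cfc (fun t => g t * g t) b * b := by rw [cfc_mul g g b hg hg]
      _ = cfc (fun t => g t * g t * t) b := by
          rw [cfc_mul (fun t => g t * g t) (fun t : ℝ => t) b (hg.mul hg) (by fun_prop),
            cfc_id' ℝ b]
      _ = cfc (fun _ : ℝ => (1:ℝ)) b := by
          refine cfc_congr fun t ht => ?_
          have hpos : 0 < t := by linarith [(hspec' t ht).1]
          have hs : Real.sqrt t * Real.sqrt t = t := Real.mul_self_sqrt hpos.le
          have hsne : Real.sqrt t ≠ 0 := ne_of_gt (Real.sqrt_pos.2 hpos)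
          show (Real.sqrt t)⁻¹ * (Real.sqrt t)⁻¹ * t = 1
          rw [← hs]; field_simp; rw [Real.sqrt_sq (Real.sqrt_nonneg t)]
      _ = 1 := cfc_const_one ℝ b
  have hu1v : ‖1 - v‖ < 1 := by
    rw [show (1:A) - v = -(v - 1) from (neg_sub v 1).symm, norm_neg]
    calc ‖v - 1‖ ≤ 2*δ := hv1n
      _ < 1 := by linarith
  set u : Aˣ := Units.oneSub (1 - v) hu1v with hudef
  have huv : (u : A) = v := sub_sub_cancel 1 v
  have hv_uinv : v * ↑u⁻¹ = 1 := by rw [← huv]; exact u.mul_inv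
  have hccsv : ((cfc g b) * (cfc g b)) * star v = ↑u⁻¹ := by
    have h' : (((cfc g b)*(cfc g b)) * star v) * v = 1 := by rw [mul_assoc, ← hbdef]; exact hccb
    calc ((cfc g b)*(cfc g b)) * star v = (((cfc g b)*(cfc g b)) * star v) * (v * ↑u⁻¹) := by rw [hv_uinv, mul_one]
      _ = ((((cfc g b)*(cfc g b)) * star v) * v) * ↑u⁻¹ := by simp only [mul_assoc]
      _ = ↑u⁻¹ := by rw [h', one_mul]
  have hwws : v * (((cfc g b)*(cfc g b)) * star v) = 1 := by rw [hccsv, ← huv]; exact u.mul_inv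
  refine ⟨v * (cfc g b), ?_, ?_, ?_, ?_⟩
  · -- star w * w = 1
    rw [StarMul.star_mul, hc_sa.star_eq]
    calc (cfc g b) * star v * (v * (cfc g b)) = ((cfc g b) * (star v * v)) * (cfc g b) := by
          rw [mul_assoc, ← mul_assoc (star v) v (cfc g b), ← mul_assoc (cfc g b) (star v * v) (cfc g b)]
      _ = 1 := by rw [← hbdef]; exact hcbc
  · -- w * star w = 1
    rw [StarMul.star_mul, hc_sa.star_eq]
    calc v * (cfc g b) * ((cfc g b) * star v) = v * (((cfc g b) * (cfc g b)) * star v) := by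
          rw [mul_assoc, ← mul_assoc (cfc g b) (cfc g b) (star v)]
      _ = 1 := hwws
  · -- w p w* = e
    have hpc : p * (cfc g b) = (cfc g b) * p := commute_cfc_of_commute hp hb_sa hpb g hg
    have hwp : (v * (cfc g b)) * p = e * (v * (cfc g b)) := by
      rw [mul_assoc, ← hpc, ← mul_assoc, hvp, mul_assoc]
    have hw2 : (v * (cfc g b)) * star (v * (cfc g b)) = 1 := by
      rw [StarMul.star_mul, hc_sa.star_eq]
      calc v * (cfc g b) * ((cfc g b) * star v) = v * (((cfc g b) * (cfc g b)) * star v) := by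
            rw [mul_assoc, ← mul_assoc (cfc g b) (cfc g b) (star v)]
        _ = 1 := hwws
    rw [hwp, mul_assoc, hw2, mul_one]
  · -- norm bound
    have hcn1 : ‖(cfc g b) - 1‖ ≤ 5*δ := by
      have key : (cfc g b) - 1 = cfc (fun t => g t - 1) b := by
        rw [cfc_sub g (fun _ : ℝ => (1:ℝ)) b hg (by fun_prop), cfc_const_one ℝ b]
      rw [key]
      refine norm_cfc_le (by linarith) fun t ht => ?_
      rw [Real.norm_eq_abs]
      calc |g t - 1| ≤ |t - 1| := sqrt_inv_close (hspec' t ht).1 (hspec' t ht).2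
        _ ≤ 5*δ := hspec t ht
    have hcn : ‖(cfc g b)‖ ≤ 1 + 5*δ := by
      calc ‖(cfc g b)‖ = ‖((cfc g b) - 1) + 1‖ := by rw [sub_add_cancel]
        _ ≤ ‖(cfc g b) - 1‖ + ‖(1:A)‖ := norm_add_le _ _
        _ ≤ 5*δ + 1 := by gcongr
        _ = 1 + 5*δ := by ring
    have key : v * (cfc g b) - 1 = (v - 1) * (cfc g b) + ((cfc g b) - 1) := by noncomm_ring
    calc ‖v * (cfc g b) - 1‖ ≤ ‖(v - 1) * (cfc g b)‖ + ‖(cfc g b) - 1‖ := key ▸ norm_add_le _ _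
      _ ≤ ‖v - 1‖ * ‖(cfc g b)‖ + ‖(cfc g b) - 1‖ := by gcongr; exact norm_mul_le _ _
      _ ≤ (2*δ) * (1 + 5*δ) + 5*δ := by gcongr
      _ ≤ 10*δ := by nlinarith


lemma conj_dist {A : Type*} [CStarAlgebra A] {w q : A} (hw : ‖w‖ ≤ 1) (hq : ‖q‖ ≤ 1) :
    ‖w * q * star w - q‖ ≤ 2 * ‖w - 1‖ := by
  have key : w * q * star w - q = (w - 1) * (q * star w) + q * (star w - 1) := by noncomm_ring
  have hsw : ‖star w‖ ≤ 1 := by rw [norm_star]; exact hw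
  have hsw1 : ‖star w - 1‖ = ‖w - 1‖ := by
    rw [show star w - 1 = star (w - 1) by rw [star_sub, star_one], norm_star]
  have b1 : ‖(w-1)*(q*star w)‖ ≤ ‖w-1‖*(‖q‖*‖star w‖) :=
    (norm_mul_le _ _).trans (mul_le_mul_of_nonneg_left (norm_mul_le _ _) (norm_nonneg _))
  have b2 : ‖q*(star w - 1)‖ ≤ ‖q‖*‖star w - 1‖ := norm_mul_le _ _
  rw [key]
  refine (norm_add_le _ _).trans ?_
  rw [hsw1] at b2
  have hq1 : ‖q‖*‖star w‖ ≤ 1 := mul_le_one₀ hq (norm_nonneg _) hsw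
  have c1 : ‖w-1‖*(‖q‖*‖star w‖) ≤ ‖w-1‖*1 := mul_le_mul_of_nonneg_left hq1 (norm_nonneg _)
  have c2 : ‖q‖*‖w-1‖ ≤ 1*‖w-1‖ := mul_le_mul_of_nonneg_right hq (norm_nonneg _)
  linarith

end AuxLemmas

set_option maxHeartbeats 2000000 in
/-- For an action with the tracial Rokhlin property, the Rokhlin projections may be
chosen so that their sum is exactly invariant. -/
theorem tracialRokhlin_invariant_defect (A : Type*) [CStarAlgebra A]
    [PartialOrder A] [StarOrderedRing A] [TopologicalSpace.SeparableSpace A]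
    (hinfdim : ¬ FiniteDimensional ℂ A) (hsimple : IsSimpleCStarAlgebra A)
    (G : Type*) [Group G] [Fintype G]
    (α : G → A ≃⋆ₐ[ℂ] A) (hα : ∀ g h : G, ∀ a : A, α (g * h) a = α g (α h a))
    (hTR : TracialRokhlin α) :
    ∀ (F : Finset A) (ε : ℝ), 0 < ε → ∀ x : A, 0 ≤ x → ‖x‖ = 1 →
      ∃ e : G → A, (∀ g, IsProjectionElem (e g)) ∧
        (∀ g h, g ≠ h → e g * e h = 0) ∧
        (∀ g h, ‖α g (e h) - e (g * h)‖ < ε) ∧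
        (∀ g, ∀ a ∈ F, ‖e g * a - a * e g‖ < ε) ∧
        (∀ g, α g (∑ h : G, e h) = ∑ h : G, e h) ∧
        MvNInHer (1 - ∑ g : G, e g) x ∧
        1 - ε < ‖(∑ g : G, e g) * x * (∑ g : G, e g)‖ := by
  intro F ε hε x hx hxn
  haveI : Nontrivial A := nontrivial_of_ne x 0 (fun h => by simp [h] at hxn)
  classical
  set n : ℕ := Fintype.card G with hn
  have hnpos : 0 < n := Fintype.card_pos
  have hn0 : ((n:ℕ):ℝ) ≠ 0 := Nat.cast_ne_zero.2 hnpos.ne'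
  have hn1 : (1:ℝ) ≤ (n:ℝ) := by exact_mod_cast hnpos
  set M : ℝ := 1 + ∑ b ∈ F, ‖b‖ with hM
  have hMsum : 0 ≤ ∑ b ∈ F, ‖b‖ := Finset.sum_nonneg fun b _ => norm_nonneg b
  have hM1 : 1 ≤ M := by rw [hM]; linarith
  have hMne : M ≠ 0 := by linarith
  have hMb : ∀ b ∈ F, ‖b‖ ≤ M := by
    intro b hb
    have h := Finset.single_le_sum (f := fun b : A => ‖b‖) (fun i _ => norm_nonneg i) hb
    rw [hM]; linarith
  set m : ℝ := min ε 1 with hmdef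
  have hm0 : 0 < m := lt_min hε one_pos
  have hm1 : m ≤ 1 := min_le_right _ _
  have hmε : m ≤ ε := min_le_left _ _
  set ε₀ : ℝ := m / (400 * (n:ℝ) * M) with hε₀def
  have h400pos : (0:ℝ) < 400 * (n:ℝ) * M := by nlinarith
  have hε₀pos : 0 < ε₀ := by rw [hε₀def]; exact div_pos hm0 h400pos
  obtain ⟨e, heproj, horth, hact, hcomm, hher, hnormx⟩ := hTR F ε₀ hε₀pos x hx hxn
  set p := ∑ g : G, e g with hpdef
  have hpproj : IsProjectionElem p := by
    constructor
    · rw [hpdef, star_sum]; exact Finset.sum_congr rfl fun g _ => (heproj g).1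
    · rw [hpdef, Finset.sum_mul_sum]
      refine Finset.sum_congr rfl fun g _ => ?_
      rw [Finset.sum_eq_single g (fun h _ hne => horth g h (Ne.symm hne)) (by simp),
        (heproj g).2]
  have hpn : ‖p‖ ≤ 1 := proj_norm_le hpproj
  have hP1 : ∀ g : G, ‖α g p - p‖ ≤ (n:ℝ) * ε₀ := by
    intro g
    have h1 : α g p = ∑ h : G, α g (e h) := by rw [hpdef]; exact _root_.map_sum (α g) e Finset.univ
    have h2 : p = ∑ h : G, e (g * h) := by
      rw [hpdef]; exact (Fintype.sum_equiv (Equiv.mulLeft g) _ _ fun h => rfl).symm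
    rw [h1]
    calc ‖(∑ h : G, α g (e h)) - p‖ = ‖∑ h : G, (α g (e h) - e (g*h))‖ := by
          rw [Finset.sum_sub_distrib, ← h2]
      _ ≤ ∑ h : G, ‖α g (e h) - e (g*h)‖ := norm_sum_le _ _
      _ ≤ ∑ _h : G, ε₀ := Finset.sum_le_sum fun h _ => (hact g h).le
      _ = (n:ℝ) * ε₀ := by
          rw [Finset.sum_const, Finset.card_univ, nsmul_eq_mul, ← hn]
  set d1 : ℝ := (n:ℝ) * ε₀ with hd1def
  have hd1pos : 0 < d1 := by
    rw [hd1def]; exact mul_pos (by exact_mod_cast hnpos) hε₀pos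
  have hd1v : M * d1 = m / 400 := by
    rw [hd1def, hε₀def]; field_simp
  have hd1le : d1 ≤ m / 400 := by nlinarith
  have hε₀d1 : ε₀ ≤ d1 := by nlinarith
  have hd1_400 : d1 ≤ 1/400 := by linarith
  set c : ℂ := ((n:ℕ):ℂ)⁻¹ with hcdef
  have hstarc : star c = c := by rw [hcdef]; norm_num
  have hcnorm : ‖c‖ = ((n:ℝ))⁻¹ := by rw [hcdef]; simp
  set a : A := c • ∑ g : G, α g p with hadef
  have hsum_sa : ∀ g : G, IsSelfAdjoint (α g p) := fun g => by
    rw [_root_.IsSelfAdjoint, ← map_star (α g) p, hpproj.1]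
  have ha_sa : IsSelfAdjoint a := by
    rw [_root_.IsSelfAdjoint, hadef, star_smul, star_sum, hstarc]
    congr 1
    exact Finset.sum_congr rfl fun g _ => (hsum_sa g).star_eq
  have hinv : ∀ g : G, α g a = a := by
    intro g
    rw [hadef, _root_.map_smul, _root_.map_sum]
    congr 1
    calc ∑ h : G, α g (α h p) = ∑ h : G, α (g*h) p :=
          Finset.sum_congr rfl fun h _ => (hα g h p).symm
      _ = ∑ h : G, α h p := Fintype.sum_equiv (Equiv.mulLeft g) _ _ fun h => rfl
  have hap : ‖a - p‖ ≤ d1 := by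
    have hps : p = c • ∑ _g : G, p := by
      rw [Finset.sum_const, Finset.card_univ, ← hn, ← Nat.cast_smul_eq_nsmul ℂ n p,
        hcdef, smul_smul, inv_mul_cancel₀ (by exact_mod_cast hnpos.ne'), one_smul]
    have hdiff : a - p = c • ∑ g : G, (α g p - p) := by
      rw [Finset.sum_sub_distrib, smul_sub, hadef, ← hps]
    calc ‖a - p‖ = ‖c‖ * ‖∑ g : G, (α g p - p)‖ := by rw [hdiff, norm_smul]
      _ ≤ ((n:ℝ))⁻¹ * ∑ g : G, ‖α g p - p‖ := by
          rw [hcnorm]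
          exact mul_le_mul_of_nonneg_left (norm_sum_le _ _) (by positivity)
      _ ≤ ((n:ℝ))⁻¹ * ((n:ℝ) * d1) := by
          refine mul_le_mul_of_nonneg_left ?_ (by positivity)
          calc ∑ g : G, ‖α g p - p‖ ≤ ∑ _g : G, d1 :=
                Finset.sum_le_sum fun g _ => by rw [hd1def]; exact hP1 g
            _ = (n:ℝ) * d1 := by
                rw [Finset.sum_const, Finset.card_univ, nsmul_eq_mul, ← hn]
      _ = d1 := by field_simp
  have haan : ‖a*a - a‖ ≤ 4*d1 := by
    have han : ‖a‖ ≤ 1 + d1 := by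
      calc ‖a‖ = ‖(a - p) + p‖ := by rw [sub_add_cancel]
        _ ≤ ‖a - p‖ + ‖p‖ := norm_add_le _ _
        _ ≤ d1 + 1 := by gcongr
        _ = 1 + d1 := by ring
    have key : a*a - a = a*(a-p) + (a-p)*p + (p*p - p) + (p - a) := by noncomm_ring
    rw [hpproj.2, sub_self, add_zero] at key
    have hpa : ‖p - a‖ = ‖a - p‖ := norm_sub_rev p a
    calc ‖a*a - a‖ ≤ ‖a*(a-p) + (a-p)*p‖ + ‖p - a‖ := key ▸ norm_add_le _ _
      _ ≤ ‖a*(a-p)‖ + ‖(a-p)*p‖ + ‖p - a‖ := by gcongr; exact norm_add_le _ _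
      _ ≤ ‖a‖*‖a-p‖ + ‖a-p‖*‖p‖ + ‖a-p‖ := by
          rw [hpa]; gcongr <;> exact norm_mul_le _ _
      _ ≤ 4*d1 := by
          nlinarith [norm_nonneg (a-p), norm_nonneg a, norm_nonneg p,
            mul_le_mul han hap (norm_nonneg _) (by linarith),
            mul_le_mul hap hpn (norm_nonneg _) hd1pos.le]
  have hη : 4*d1 ≤ 1/16 := by linarith
  obtain ⟨hEproj, hEa⟩ := cfc_rokF_proj ha_sa hη haan
  set E : A := cfc rokF a with hEdef
  have hEinv : ∀ g : G, α g E = E := by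
    intro g
    rw [hEdef, StarAlgHomClass.map_cfc (α g) rokF a rokF_cont.continuousOn
      ((StarAlgEquiv.isometry (α g)).continuous) ha_sa (by rw [hinv g]; exact ha_sa), hinv g]
  have hEp : ‖E - p‖ ≤ 9*d1 := by
    calc ‖E - p‖ = ‖(E - a) + (a - p)‖ := by rw [sub_add_sub_cancel]
      _ ≤ ‖E - a‖ + ‖a - p‖ := norm_add_le _ _
      _ ≤ 2*(4*d1) + d1 := by gcongr
      _ = 9*d1 := by ring
  have hEp' : ‖E - p‖ ≤ 1/10 := by linarith
  obtain ⟨w, hw1, hw2, hwpw, hwn⟩ := close_proj_conj hpproj hEproj hEp'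
  have hwn' : ‖w - 1‖ ≤ 90*d1 := le_trans hwn (by linarith)
  have hwnorm : ‖w‖ ≤ 1 := by
    have h := CStarRing.norm_star_mul_self (x := w)
    rw [hw1, norm_one] at h
    nlinarith [norm_nonneg w]
  have hconj : ∀ q : A, ‖q‖ ≤ 1 → ‖w * q * star w - q‖ ≤ 2*‖w-1‖ :=
    fun q hq => conj_dist hwnorm hq
  set E' : G → A := fun g => w * e g * star w with hE'def
  have hE'close : ∀ g : G, ‖E' g - e g‖ ≤ 180*d1 := by
    intro g
    calc ‖E' g - e g‖ ≤ 2*‖w-1‖ := hconj (e g) (proj_norm_le (heproj g))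
      _ ≤ 180*d1 := by linarith
  have hconj_mul : ∀ y z : A, (w*y*star w) * (w*z*star w) = w*(y*z)*star w := by
    intro y z
    simp only [mul_assoc]
    rw [show star w * (w * (z * star w)) = z * star w from by rw [← mul_assoc, hw1, one_mul]]
  have hsum : ∑ h : G, E' h = E := by
    calc ∑ h : G, E' h = (∑ h : G, w * e h) * star w := by
          simp only [hE'def]; exact (Finset.sum_mul _ _ _).symm
      _ = w * p * star w := by rw [← Finset.mul_sum, ← hpdef]
      _ = E := hwpw
  have hkey1 : ε₀ + 360*d1 < ε := by linarith
  refine ⟨E', ?_, ?_, ?_, ?_, ?_, ?_, ?_⟩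
  · intro g
    constructor
    · show star (w * e g * star w) = w * e g * star w
      simp only [StarMul.star_mul, star_star, (heproj g).1, mul_assoc]
    · show (w * e g * star w) * (w * e g * star w) = w * e g * star w
      rw [hconj_mul, (heproj g).2]
  · intro g h hne
    show (w * e g * star w) * (w * e h * star w) = 0
    rw [hconj_mul, horth g h hne, mul_zero, zero_mul]
  · intro g h
    have t1 : ‖α g (E' h) - α g (e h)‖ = ‖E' h - e h‖ := by
      rw [← _root_.map_sub (α g)]; exact StarAlgEquiv.norm_map (α g) _
    have t3 : ‖e (g*h) - E' (g*h)‖ = ‖E' (g*h) - e (g*h)‖ := norm_sub_rev _ _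
    calc ‖α g (E' h) - E' (g*h)‖
        = ‖(α g (E' h) - α g (e h)) + (α g (e h) - e (g*h)) + (e (g*h) - E' (g*h))‖ := by
          congr 1; abel
      _ ≤ ‖α g (E' h) - α g (e h)‖ + ‖α g (e h) - e (g*h)‖ + ‖e (g*h) - E' (g*h)‖ :=
          norm_add₃_le
      _ < 180*d1 + ε₀ + 180*d1 := by
          rw [t1, t3]
          have h1 := hE'close h
          have h2 := hact g h
          have h3 := hE'close (g*h)
          linarith
      _ ≤ ε := by linarith
  · intro g b hb
    have key : E' g * b - b * E' g
        = (E' g - e g)*b + (e g * b - b * e g) + b*(e g - E' g) := by noncomm_ring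
    have hbM := hMb b hb
    have h1 : ‖(E' g - e g)*b‖ ≤ 180*d1*M := by
      refine le_trans (norm_mul_le _ _) ?_
      nlinarith [hE'close g, norm_nonneg (E' g - e g), norm_nonneg b, hd1pos]
    have h3 : ‖b*(e g - E' g)‖ ≤ M*(180*d1) := by
      refine le_trans (norm_mul_le _ _) ?_
      rw [norm_sub_rev]
      nlinarith [hE'close g, norm_nonneg b, norm_nonneg (E' g - e g), hd1pos]
    have h2 := hcomm g b hb
    have e1 : 180*d1*M = 180*(m/400) := by rw [← hd1v]; ring
    have e2 : M*(180*d1) = 180*(m/400) := by rw [← hd1v]; ring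
    calc ‖E' g * b - b * E' g‖
        ≤ ‖(E' g - e g)*b‖ + ‖e g * b - b * e g‖ + ‖b*(e g - E' g)‖ :=
          key ▸ norm_add₃_le
      _ < 180*d1*M + ε₀ + M*(180*d1) := by linarith
      _ ≤ ε := by rw [e1, e2]; linarith
  · intro g; rw [hsum]; exact hEinv g
  · rw [hsum]
    obtain ⟨q, hq, hqmem, vv, hvv1, hvv2⟩ := hher
    refine ⟨q, hq, hqmem, vv * star w, ?_, ?_⟩
    · calc star (vv * star w) * (vv * star w) = w * (star vv * (vv * star w)) := by
            rw [StarMul.star_mul, star_star]; simp only [mul_assoc]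
        _ = w * ((1 - p) * star w) := by rw [show star vv * (vv * star w) = (1-p) * star w
            from by rw [← mul_assoc, hvv1]]
        _ = 1 - E := by rw [← mul_assoc, mul_sub, mul_one, sub_mul, hw2, hwpw]
    · calc (vv * star w) * star (vv * star w) = vv * (star w * (w * star vv)) := by
            rw [StarMul.star_mul, star_star]; simp only [mul_assoc]
        _ = vv * star vv := by rw [show star w * (w * star vv) = star vv
            from by rw [← mul_assoc, hw1, one_mul]]
        _ = q := hvv2
  · rw [hsum]
    have hEn : ‖E‖ ≤ 1 := proj_norm_le hEproj
    have key : E*x*E - p*x*p = (E-p)*x*E + p*x*(E-p) := by noncomm_ring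
    have hb1 : ‖(E-p)*x*E‖ ≤ 9*d1 := by
      calc ‖(E-p)*x*E‖ ≤ ‖(E-p)*x‖*‖E‖ := norm_mul_le _ _
        _ ≤ (‖E-p‖*‖x‖)*‖E‖ := by gcongr; exact norm_mul_le _ _
        _ ≤ 9*d1 := by
            rw [hxn]
            nlinarith [hEp, hEn, norm_nonneg (E-p), norm_nonneg E, hd1pos]
    have hb2 : ‖p*x*(E-p)‖ ≤ 9*d1 := by
      calc ‖p*x*(E-p)‖ ≤ ‖p*x‖*‖E-p‖ := norm_mul_le _ _
        _ ≤ (‖p‖*‖x‖)*‖E-p‖ := by gcongr; exact norm_mul_le _ _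
        _ ≤ 9*d1 := by
            rw [hxn]
            nlinarith [hEp, hpn, norm_nonneg (E-p), norm_nonneg p, hd1pos]
    have htri : ‖p*x*p‖ ≤ ‖E*x*E‖ + ‖p*x*p - E*x*E‖ := by
      calc ‖p*x*p‖ = ‖E*x*E + (p*x*p - E*x*E)‖ := by congr 1; abel
        _ ≤ ‖E*x*E‖ + ‖p*x*p - E*x*E‖ := norm_add_le _ _
    have hd : ‖p*x*p - E*x*E‖ ≤ 18*d1 := by
      rw [norm_sub_rev, key]
      calc ‖(E-p)*x*E + p*x*(E-p)‖ ≤ ‖(E-p)*x*E‖ + ‖p*x*(E-p)‖ := norm_add_le _ _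
        _ ≤ 18*d1 := by linarith
    linarith
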